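/- Let ψ be the function defined in the context. Then for all real numbers δ and r with 0 ≤ δ ≤ r ≤ l0 and r > 0, one has ψ(r + δ) + ψ(r − δ) − 2 ψ(r) ≤ ψ''(r) δ². -/

import Mathlib

open Set Filter MeasureTheory

/-- Lemma 4.1(2), second part: the second-difference bound
ψ(r+δ) + ψ(r−δ) − 2ψ(r) ≤ ψ''(r) δ² for 0 ≤ δ ≤ r ≤ l0. -/
theorem stmt_2
    (l0 c1 c2 : ℝ) (hl0 : 0 < l0) (hc1 : 0 < c1) (hc2 : 0 < c2)
    (g ψ : ℝ → ℝ)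
    (hg_cont : ContinuousOn g (Icc 0 (2 * l0)))
    (hg_smooth : ContDiffOn ℝ 3 g (Ioc 0 (2 * l0)))
    (hg0 : g 0 = 0)
    (hg1 : ∀ r ∈ Ioc 0 (2 * l0), 0 ≤ deriv g r)
    (hg2 : ∀ r ∈ Ioc 0 (2 * l0), deriv (deriv g) r ≤ 0)
    (hg3 : ∀ r ∈ Ioc 0 (2 * l0), 0 ≤ deriv (deriv (deriv g)) r)
    (a b : ℝ)
    (ha : a = c1 + Real.exp (-(c2 * g (2 * l0))))
    (hb : b = -(c2 * deriv g (2 * l0) * Real.exp (-(c2 * g (2 * l0)))))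
    (hψ1 : ∀ r ≤ 2 * l0, ψ r = c1 * r + ∫ s in (0:ℝ)..r, Real.exp (-(c2 * g s)))
    (hψ2 : ∀ r, 2 * l0 < r →
      ψ r = ψ (2 * l0) + (a / 2) * ∫ s in (0:ℝ)..(r - 2 * l0), (1 + Real.exp ((2 * b / a) * s)))
    (hψ' : ∀ r ∈ Ioc 0 (2 * l0), deriv ψ r = c1 + Real.exp (-(c2 * g r)))
    (hψ'' : ∀ r ∈ Ioc 0 (2 * l0),
      deriv (deriv ψ) r = -(c2 * deriv g r * Real.exp (-(c2 * g r)))) :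
    ∀ δ r : ℝ, 0 ≤ δ → δ ≤ r → r ≤ l0 → 0 < r →
      ψ (r + δ) + ψ (r - δ) - 2 * ψ r ≤ deriv (deriv ψ) r * δ ^ 2 := by
  intro δ r hδ0 hδr hrl0 hr0
  have hK : deriv (deriv ψ) r = -(c2 * deriv g r * Real.exp (-(c2 * g r))) :=
    hψ'' r ⟨hr0, by linarith⟩
  rcases eq_or_lt_of_le hδ0 with hδeq | hδpos
  · rw [← hδeq]
    norm_num
    linarith
  -- continuity of h on [0, 2l0]
  have hconth : ContinuousOn (fun x => Real.exp (-(c2 * g x))) (Icc 0 (2*l0)) :=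
    Real.continuous_exp.comp_continuousOn ((continuousOn_const.mul hg_cont).neg)
  -- smoothness chain on the open interval
  have hs_open : IsOpen (Ioo (0:ℝ) (2*l0)) := isOpen_Ioo
  have hC3 : ContDiffOn ℝ 3 g (Ioo 0 (2*l0)) := hg_smooth.mono Ioo_subset_Ioc_self
  have hC2 : ContDiffOn ℝ 2 (deriv g) (Ioo 0 (2*l0)) :=
    hC3.deriv_of_isOpen hs_open (by norm_num)
  have hC1 : ContDiffOn ℝ 1 (deriv (deriv g)) (Ioo 0 (2*l0)) :=
    hC2.deriv_of_isOpen hs_open (by norm_num)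
  have hDg : ∀ x ∈ Ioo (0:ℝ) (2*l0), HasDerivAt g (deriv g x) x := fun x hx =>
    ((hC3.differentiableOn (by norm_num)).differentiableAt (hs_open.mem_nhds hx)).hasDerivAt
  have hDg1 : ∀ x ∈ Ioo (0:ℝ) (2*l0), HasDerivAt (deriv g) (deriv (deriv g) x) x := fun x hx =>
    ((hC2.differentiableOn (by norm_num)).differentiableAt (hs_open.mem_nhds hx)).hasDerivAt
  have hDg2 : ∀ x ∈ Ioo (0:ℝ) (2*l0), HasDerivAt (deriv (deriv g)) (deriv (deriv (deriv g)) x) x := fun x hx =>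
    ((hC1.differentiableOn (by norm_num)).differentiableAt (hs_open.mem_nhds hx)).hasDerivAt
  have Hh : ∀ x ∈ Ioo (0:ℝ) (2*l0), HasDerivAt (fun y => Real.exp (-(c2 * g y)))
      (Real.exp (-(c2 * g x)) * -(c2 * deriv g x)) x := fun x hx =>
    (((hDg x hx).const_mul c2).neg).exp
  have Hp : ∀ x ∈ Ioo (0:ℝ) (2*l0), HasDerivAt
      (fun y => Real.exp (-(c2 * g y)) * -(c2 * deriv g y))
      (Real.exp (-(c2 * g x)) * -(c2 * deriv g x) * -(c2 * deriv g x)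
       + Real.exp (-(c2 * g x)) * -(c2 * deriv (deriv g) x)) x := fun x hx =>
    (Hh x hx).mul (((hDg1 x hx).const_mul c2).neg)
  have Hq : ∀ x ∈ Ioo (0:ℝ) (2*l0), HasDerivAt
      (fun y => Real.exp (-(c2 * g y)) * -(c2 * deriv g y) * -(c2 * deriv g y)
       + Real.exp (-(c2 * g y)) * -(c2 * deriv (deriv g) y))
      ((Real.exp (-(c2 * g x)) * -(c2 * deriv g x) * -(c2 * deriv g x)
       + Real.exp (-(c2 * g x)) * -(c2 * deriv (deriv g) x)) * -(c2 * deriv g x)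
       + Real.exp (-(c2 * g x)) * -(c2 * deriv g x) * -(c2 * deriv (deriv g) x)
       + (Real.exp (-(c2 * g x)) * -(c2 * deriv g x) * -(c2 * deriv (deriv g) x)
       + Real.exp (-(c2 * g x)) * -(c2 * deriv (deriv (deriv g)) x))) x := fun x hx =>
    ((Hp x hx).mul (((hDg1 x hx).const_mul c2).neg)).add
      ((Hh x hx).mul (((hDg2 x hx).const_mul c2).neg))
  -- q is antitone on the open interval
  have hq_anti : AntitoneOn
      (fun y => Real.exp (-(c2 * g y)) * -(c2 * deriv g y) * -(c2 * deriv g y)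
       + Real.exp (-(c2 * g y)) * -(c2 * deriv (deriv g) y)) (Ioo 0 (2*l0)) := by
    apply antitoneOn_of_deriv_nonpos (convex_Ioo _ _)
    · exact fun x hx => (Hq x hx).continuousAt.continuousWithinAt
    · rw [interior_Ioo]
      exact fun x hx => (Hq x hx).differentiableAt.differentiableWithinAt
    · rw [interior_Ioo]
      intro x hx
      rw [(Hq x hx).deriv]
      have he : (0:ℝ) < Real.exp (-(c2 * g x)) := Real.exp_pos _
      have h1 := hg1 x (Ioo_subset_Ioc_self hx)
      have h2 := hg2 x (Ioo_subset_Ioc_self hx)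
      have h3 := hg3 x (Ioo_subset_Ioc_self hx)
      nlinarith [mul_nonneg (mul_nonneg h1 h1) h1, mul_nonneg h1 h1,
        mul_nonpos_of_nonneg_of_nonpos h1 h2,
        mul_pos (mul_pos hc2 hc2) hc2, mul_pos hc2 hc2,
        mul_nonneg (mul_nonneg (mul_pos (mul_pos hc2 hc2) hc2).le
          (mul_nonneg (mul_nonneg h1 h1) h1)) he.le,
        mul_nonneg hc2.le h3,
        mul_nonneg (mul_nonneg hc2.le h3) he.le,
        mul_nonneg (mul_nonneg (mul_pos hc2 hc2).le
          (neg_nonneg.mpr (mul_nonpos_of_nonneg_of_nonpos h1 h2))) he.le]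
  -- continuity of p on the open interval
  have hcontp : ContinuousOn (fun y => Real.exp (-(c2 * g y)) * -(c2 * deriv g y))
      (Ioo 0 (2*l0)) := fun x hx => (Hp x hx).continuousAt.continuousWithinAt
  -- the key pointwise bound
  have key : ∀ t ∈ Ico (0:ℝ) δ,
      Real.exp (-(c2 * g (r+t))) - Real.exp (-(c2 * g (r-t)))
        ≤ 2 * t * (Real.exp (-(c2 * g r)) * -(c2 * deriv g r)) := by
    intro t ht
    obtain ⟨ht0, htδ⟩ := ht
    have hmem : ∀ s ∈ Icc (0:ℝ) t, r + s ∈ Ioo (0:ℝ) (2*l0) ∧ r - s ∈ Ioo (0:ℝ) (2*l0) := by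
      intro s hs
      obtain ⟨hs0, hst⟩ := hs
      constructor
      · constructor <;> [linarith; linarith]
      · constructor <;> [linarith; linarith]
    -- F s := p (r+s) + p (r-s) has derivative q(r+s) - q(r-s) ≤ 0, so F s ≤ F 0 = 2 p r
    have HF : ∀ s ∈ Icc (0:ℝ) t, HasDerivAt
        (fun y => Real.exp (-(c2 * g (r+y))) * -(c2 * deriv g (r+y))
          + Real.exp (-(c2 * g (r-y))) * -(c2 * deriv g (r-y)))
        ((Real.exp (-(c2 * g (r+s))) * -(c2 * deriv g (r+s)) * -(c2 * deriv g (r+s))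
          + Real.exp (-(c2 * g (r+s))) * -(c2 * deriv (deriv g) (r+s)))
         - (Real.exp (-(c2 * g (r-s))) * -(c2 * deriv g (r-s)) * -(c2 * deriv g (r-s))
          + Real.exp (-(c2 * g (r-s))) * -(c2 * deriv (deriv g) (r-s)))) s := by
      intro s hs
      obtain ⟨hp1, hp2⟩ := hmem s hs
      have A := (Hp (r+s) hp1).comp s ((hasDerivAt_id s).const_add r)
      have B := (Hp (r-s) hp2).comp s ((hasDerivAt_id s).const_sub r)
      have := A.add B
      refine this.congr_deriv ?_
      ring
    have hFanti : AntitoneOn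
        (fun y => Real.exp (-(c2 * g (r+y))) * -(c2 * deriv g (r+y))
          + Real.exp (-(c2 * g (r-y))) * -(c2 * deriv g (r-y))) (Icc 0 t) := by
      apply antitoneOn_of_deriv_nonpos (convex_Icc _ _)
      · exact fun x hx => (HF x hx).continuousAt.continuousWithinAt
      · intro x hx
        rw [interior_Icc] at hx
        exact (HF x (Ioo_subset_Icc_self hx)).differentiableAt.differentiableWithinAt
      · intro x hx
        rw [interior_Icc] at hx
        have hx' := Ioo_subset_Icc_self hx
        rw [(HF x hx').deriv]
        obtain ⟨hp1, hp2⟩ := hmem x hx'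
        have := hq_anti hp2 hp1 (by linarith [hx.1])
        simpa using sub_nonpos.mpr this
    -- FTC for G s := h(r+s) - h(r-s)
    have HG : ∀ s ∈ uIcc (0:ℝ) t, HasDerivAt
        (fun y => Real.exp (-(c2 * g (r+y))) - Real.exp (-(c2 * g (r-y))))
        (Real.exp (-(c2 * g (r+s))) * -(c2 * deriv g (r+s))
          + Real.exp (-(c2 * g (r-s))) * -(c2 * deriv g (r-s))) s := by
      intro s hs
      rw [uIcc_of_le ht0] at hs
      obtain ⟨hp1, hp2⟩ := hmem s hs
      have A := (Hh (r+s) hp1).comp s ((hasDerivAt_id s).const_add r)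
      have B := (Hh (r-s) hp2).comp s ((hasDerivAt_id s).const_sub r)
      have := A.sub B
      refine this.congr_deriv ?_
      ring
    have hFcont : ContinuousOn
        (fun y => Real.exp (-(c2 * g (r+y))) * -(c2 * deriv g (r+y))
          + Real.exp (-(c2 * g (r-y))) * -(c2 * deriv g (r-y))) (Icc 0 t) :=
      fun x hx => (HF x hx).continuousAt.continuousWithinAt
    have hFint : IntervalIntegrable
        (fun y => Real.exp (-(c2 * g (r+y))) * -(c2 * deriv g (r+y))
          + Real.exp (-(c2 * g (r-y))) * -(c2 * deriv g (r-y))) volume 0 t := by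
      apply ContinuousOn.intervalIntegrable
      rwa [uIcc_of_le ht0]
    have hftc := intervalIntegral.integral_eq_sub_of_hasDerivAt HG hFint
    have h0 : r + 0 = r := by ring
    have h0' : r - 0 = r := by ring
    have hGt : Real.exp (-(c2 * g (r+t))) - Real.exp (-(c2 * g (r-t)))
        = ∫ s in (0:ℝ)..t, (Real.exp (-(c2 * g (r+s))) * -(c2 * deriv g (r+s))
          + Real.exp (-(c2 * g (r-s))) * -(c2 * deriv g (r-s))) := by
      rw [hftc]
      rw [h0, h0']
      ring
    rw [hGt]
    have hle : ∫ s in (0:ℝ)..t, (Real.exp (-(c2 * g (r+s))) * -(c2 * deriv g (r+s))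
          + Real.exp (-(c2 * g (r-s))) * -(c2 * deriv g (r-s)))
        ≤ ∫ _ in (0:ℝ)..t, (2 * (Real.exp (-(c2 * g r)) * -(c2 * deriv g r))) := by
      apply intervalIntegral.integral_mono_on ht0 hFint intervalIntegrable_const
      intro s hs
      have := hFanti (left_mem_Icc.mpr ht0) hs hs.1
      simp only [h0, h0'] at this
      linarith
    rw [intervalIntegral.integral_const] at hle
    simp only [smul_eq_mul, sub_zero] at hle
    linarith
  -- integrability of the two shifted integrands on [0,δ]
  have hint1 : IntervalIntegrable (fun t => Real.exp (-(c2 * g (r+t)))) volume 0 δ := by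
    apply ContinuousOn.intervalIntegrable
    apply hconth.comp ((continuous_const.add continuous_id).continuousOn)
    intro t ht
    rw [uIcc_of_le hδ0] at ht
    simp only [Pi.add_apply, id_eq]
    exact ⟨by linarith [ht.1], by linarith [ht.2]⟩
  have hint2 : IntervalIntegrable (fun t => Real.exp (-(c2 * g (r-t)))) volume 0 δ := by
    apply ContinuousOn.intervalIntegrable
    apply hconth.comp ((continuous_const.sub continuous_id).continuousOn)
    intro t ht
    rw [uIcc_of_le hδ0] at ht
    simp only [Pi.sub_apply, id_eq]
    exact ⟨by linarith [ht.1, ht.2], by linarith [ht.1]⟩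
  have hII : ∀ u v : ℝ, 0 ≤ u → u ≤ v → v ≤ 2*l0 → IntervalIntegrable
      (fun x => Real.exp (-(c2 * g x))) volume u v := by
    intro u v hu huv hv
    apply ContinuousOn.intervalIntegrable
    apply hconth.mono
    rw [uIcc_of_le huv]
    exact Icc_subset_Icc hu hv
  have e1 : (∫ t in (0:ℝ)..δ, Real.exp (-(c2 * g (r + t))))
      = ∫ x in r..(r+δ), Real.exp (-(c2 * g x)) := by
    have := intervalIntegral.integral_comp_add_left (a := (0:ℝ)) (b := δ)
      (fun x => Real.exp (-(c2 * g x))) r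
    simpa using this
  have e2 : (∫ t in (0:ℝ)..δ, Real.exp (-(c2 * g (r - t))))
      = ∫ x in (r-δ)..r, Real.exp (-(c2 * g x)) := by
    have := intervalIntegral.integral_comp_sub_left (a := (0:ℝ)) (b := δ)
      (fun x => Real.exp (-(c2 * g x))) r
    simpa using this
  have hsplit1 : (∫ x in (0:ℝ)..(r+δ), Real.exp (-(c2 * g x)))
      - ∫ x in (0:ℝ)..r, Real.exp (-(c2 * g x))
      = ∫ x in r..(r+δ), Real.exp (-(c2 * g x)) :=
    intervalIntegral.integral_interval_sub_left
      (hII 0 (r+δ) le_rfl (by linarith) (by linarith))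
      (hII 0 r le_rfl (by linarith) (by linarith))
  have hsplit2 : (∫ x in (0:ℝ)..r, Real.exp (-(c2 * g x)))
      - ∫ x in (0:ℝ)..(r-δ), Real.exp (-(c2 * g x))
      = ∫ x in (r-δ)..r, Real.exp (-(c2 * g x)) :=
    intervalIntegral.integral_interval_sub_left
      (hII 0 r le_rfl (by linarith) (by linarith))
      (hII 0 (r-δ) le_rfl (by linarith) (by linarith))
  have hsub : (∫ t in (0:ℝ)..δ, (Real.exp (-(c2 * g (r + t))) - Real.exp (-(c2 * g (r - t)))))
      = (∫ t in (0:ℝ)..δ, Real.exp (-(c2 * g (r + t))))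
        - ∫ t in (0:ℝ)..δ, Real.exp (-(c2 * g (r - t))) :=
    intervalIntegral.integral_sub hint1 hint2
  have hLHS : ψ (r + δ) + ψ (r - δ) - 2 * ψ r
      = ∫ t in (0:ℝ)..δ, (Real.exp (-(c2 * g (r + t))) - Real.exp (-(c2 * g (r - t)))) := by
    rw [hψ1 (r+δ) (by linarith), hψ1 (r-δ) (by linarith), hψ1 r (by linarith),
      hsub, e1, e2]
    linarith [hsplit1, hsplit2]
  -- a.e. bound and conclusion
  have hne : ∀ᵐ (t:ℝ), t ≠ δ := by
    rw [ae_iff]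
    have hset : {t : ℝ | ¬t ≠ δ} = {δ} := by ext x; simp
    rw [hset]
    exact Real.volume_singleton
  have hmemae := ae_restrict_mem (μ := volume) (measurableSet_Icc : MeasurableSet (Icc (0:ℝ) δ))
  have hae : (fun t => Real.exp (-(c2 * g (r + t))) - Real.exp (-(c2 * g (r - t))))
      ≤ᵐ[volume.restrict (Icc 0 δ)]
      fun t => 2 * t * (Real.exp (-(c2 * g r)) * -(c2 * deriv g r)) := by
    filter_upwards [hmemae, hne.filter_mono (ae_mono Measure.restrict_le_self)] with t ht htne
    exact key t ⟨ht.1, lt_of_le_of_ne ht.2 htne⟩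
  have hintb : IntervalIntegrable
      (fun t => 2 * t * (Real.exp (-(c2 * g r)) * -(c2 * deriv g r))) volume 0 δ := by
    apply Continuous.intervalIntegrable
    fun_prop
  have hmono := intervalIntegral.integral_mono_ae_restrict hδ0 (hint1.sub hint2) hintb hae
  have hval : (∫ t in (0:ℝ)..δ, 2 * t * (Real.exp (-(c2 * g r)) * -(c2 * deriv g r)))
      = (Real.exp (-(c2 * g r)) * -(c2 * deriv g r)) * δ^2 := by
    have hfe : (fun t : ℝ => 2 * t * (Real.exp (-(c2 * g r)) * -(c2 * deriv g r)))
        = fun t : ℝ => (2 * (Real.exp (-(c2 * g r)) * -(c2 * deriv g r))) * t := by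
      funext t; ring
    rw [hfe, intervalIntegral.integral_const_mul, integral_id]
    ring
  rw [hLHS, hK]
  rw [hval] at hmono
  have : (Real.exp (-(c2 * g r)) * -(c2 * deriv g r)) * δ^2
      = -(c2 * deriv g r * Real.exp (-(c2 * g r))) * δ ^ 2 := by ring
  linarith [hmono, this.le, this.ge]
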